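/- Let F_q be a finite field and n ≥ 1. Then every A ∈ GL(n, F_q) can be written A = S₁·S₂ where S₁ and S₂ are invertible symmetric n×n matrices over F_q. Equivalently, every element of GL(n, F_q) is strongly ι-real for the automorphism ι(g) = (gᵀ)⁻¹. -/

import Mathlib

open Matrix

noncomputable section

open Polynomial
open scoped DirectSum

namespace GLTwoSymm


variable {F : Type} [Field F]

/-- Monic normalization of a polynomial. -/
def mon (q : F[X]) : F[X] := q * C (q.leadingCoeff)⁻¹

lemma mon_monic {q : F[X]} (hq : q ≠ 0) : (mon q).Monic :=
  Polynomial.monic_mul_leadingCoeff_inv hq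

lemma mon_dvd_iff {q : F[X]} (hq : q ≠ 0) (x : F[X]) : mon q ∣ x ↔ q ∣ x :=
  (Polynomial.isUnit_C.mpr (isUnit_iff_ne_zero.mpr
    (inv_ne_zero (leadingCoeff_ne_zero.mpr hq)))).mul_right_dvd

lemma mod_eq_of_dvd_sub {m a b : F[X]} (hm : m.Monic) (h : m ∣ a - b) :
    a %ₘ m = b %ₘ m := by
  obtain ⟨c, hc⟩ := h
  have : a = b + m * c := by linear_combination hc
  rw [this, Polynomial.add_modByMonic, Polynomial.self_mul_modByMonic hm, add_zero]

lemma mem_span_iff {q : F[X]} (hq : q ≠ 0) (x : F[X]) :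
    x ∈ (F[X] ∙ q) ↔ mon q ∣ x := by
  rw [mon_dvd_iff hq]
  exact Ideal.mem_span_singleton

/-- The residue functional on `F[X] ⧸ (q)`: the top coefficient of the canonical
representative of degree `< deg q`. -/
def resid (q : F[X]) : (F[X] ⧸ (F[X] ∙ q)) → F :=
  fun z => ((Quotient.out z) %ₘ mon q).coeff ((mon q).natDegree - 1)

lemma resid_mk {q : F[X]} (hq : q ≠ 0) (a : F[X]) :
    resid q (Ideal.Quotient.mk (F[X] ∙ q) a)
      = (a %ₘ mon q).coeff ((mon q).natDegree - 1) := by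
  unfold resid
  congr 1
  apply mod_eq_of_dvd_sub (mon_monic hq)
  rw [← mem_span_iff hq]
  have h1 : Ideal.Quotient.mk (F[X] ∙ q) (Quotient.out (Ideal.Quotient.mk (F[X] ∙ q) a)) =
      Ideal.Quotient.mk (F[X] ∙ q) a := Quotient.out_eq _
  exact Ideal.Quotient.eq.mp h1

lemma resid_zero {q : F[X]} (hq : q ≠ 0) : resid q 0 = 0 := by
  have : (0 : F[X] ⧸ (F[X] ∙ q)) = Ideal.Quotient.mk (F[X] ∙ q) 0 := by simp
  rw [this, resid_mk hq, Polynomial.zero_modByMonic, Polynomial.coeff_zero]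

lemma resid_add {q : F[X]} (hq : q ≠ 0) (z z' : F[X] ⧸ (F[X] ∙ q)) :
    resid q (z + z') = resid q z + resid q z' := by
  obtain ⟨a, rfl⟩ := Ideal.Quotient.mk_surjective z
  obtain ⟨b, rfl⟩ := Ideal.Quotient.mk_surjective z'
  rw [← map_add, resid_mk hq, resid_mk hq, resid_mk hq,
    Polynomial.add_modByMonic, Polynomial.coeff_add]

lemma resid_C_mul {q : F[X]} (hq : q ≠ 0) (c : F) (z : F[X] ⧸ (F[X] ∙ q)) :
    resid q (Ideal.Quotient.mk (F[X] ∙ q) (C c) * z) = c * resid q z := by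
  obtain ⟨a, rfl⟩ := Ideal.Quotient.mk_surjective z
  rw [← _root_.map_mul, resid_mk hq, resid_mk hq, ← Polynomial.smul_eq_C_mul,
    Polynomial.smul_modByMonic, Polynomial.coeff_smul, smul_eq_mul]

lemma smul_eq_mk_mul {q : F[X]} (a : F[X]) (z : F[X] ⧸ (F[X] ∙ q)) :
    a • z = Ideal.Quotient.mk (F[X] ∙ q) a * z := by
  obtain ⟨b, rfl⟩ := Ideal.Quotient.mk_surjective z
  rw [← _root_.map_mul]
  show a • Submodule.Quotient.mk b = Submodule.Quotient.mk (a * b)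
  rw [← Submodule.Quotient.mk_smul]; rfl

lemma resid_nondeg {q : F[X]} (hq : q ≠ 0) (z : F[X] ⧸ (F[X] ∙ q)) (hz : z ≠ 0) :
    ∃ y, resid q (z * y) ≠ 0 := by
  have hm := mon_monic hq
  set m := mon q with hmdef
  set d := m.natDegree with hd
  set r := (Quotient.out z) %ₘ m with hr
  have hzr : Ideal.Quotient.mk (F[X] ∙ q) r = z := by
    have h2 : Ideal.Quotient.mk (F[X] ∙ q) (Quotient.out z) = z := Quotient.out_eq _
    rw [← h2]
    rw [Ideal.Quotient.eq]
    rw [mem_span_iff hq]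
    have := Polynomial.modByMonic_add_div (Quotient.out z) m
    exact ⟨-(Quotient.out z /ₘ m), by linear_combination this⟩
  have hr0 : r ≠ 0 := by
    intro h
    rw [h] at hzr
    simp at hzr
    exact hz hzr.symm
  have hdeg : r.degree < m.degree := Polynomial.degree_modByMonic_lt _ hm
  have hnat : r.natDegree < d := Polynomial.natDegree_lt_natDegree hr0 hdeg
  set e := r.natDegree with he
  set t := C (r.leadingCoeff)⁻¹ * X ^ (d - 1 - e) with ht
  set s := r * t with hs
  have hsm : s.Monic := by
    rw [hs, ht, ← mul_assoc]
    exact (Polynomial.monic_mul_leadingCoeff_inv hr0).mul (Polynomial.monic_X_pow _)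
  have hsd : s.natDegree = d - 1 := by
    rw [hs, ht, ← mul_assoc]
    rw [(Polynomial.monic_mul_leadingCoeff_inv hr0).natDegree_mul (Polynomial.monic_X_pow _)]
    rw [Polynomial.natDegree_mul_C (inv_ne_zero (leadingCoeff_ne_zero.mpr hr0)),
      Polynomial.natDegree_X_pow]
    omega
  refine ⟨Ideal.Quotient.mk _ t, ?_⟩
  rw [← hzr, ← _root_.map_mul, resid_mk hq, ← hmdef, ← hs, ← hd]
  have hmod : s %ₘ m = s := by
    rw [Polynomial.modByMonic_eq_self_iff hm]
    rw [Polynomial.degree_eq_natDegree hsm.ne_zero, Polynomial.degree_eq_natDegree hm.ne_zero,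
      hsd]
    exact_mod_cast by omega
  rw [hmod, ← hsd, hsm.coeff_natDegree]
  exact one_ne_zero

end GLTwoSymm

open GLTwoSymm

set_option maxHeartbeats 2000000 in
/-- Every invertible matrix over a finite field is a product of two invertible
symmetric matrices; equivalently, every element of `GL(n, F_q)` is strongly
`ι`-real for the automorphism `ι(g) = (gᵀ)⁻¹`. -/
theorem GL_product_of_two_symmetric
    (F : Type) [Field F] [Fintype F] (n : ℕ) (hn : 1 ≤ n)
    (A : GL (Fin n) F) :
    ∃ S₁ S₂ : GL (Fin n) F,
      (↑S₁ : Matrix (Fin n) (Fin n) F)ᵀ = ↑S₁ ∧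
      (↑S₂ : Matrix (Fin n) (Fin n) F)ᵀ = ↑S₂ ∧
      A = S₁ * S₂ := by
  classical
  set A' : Matrix (Fin n) (Fin n) F := (↑A : Matrix (Fin n) (Fin n) F) with hA'
  set f : (Fin n → F) →ₗ[F] (Fin n → F) := Matrix.mulVecLin A' with hf
  have hTor : Module.IsTorsion F[X] (Module.AEval' f) := by
    intro x
    refine ⟨⟨f.charpoly, mem_nonZeroDivisors_of_ne_zero f.charpoly_monic.ne_zero⟩, ?_⟩
    show f.charpoly • x = 0
    have hx : x = Module.AEval'.of f ((Module.AEval'.of f).symm x) :=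
      (LinearEquiv.apply_symm_apply _ _).symm
    rw [hx, ← Module.AEval.of_aeval_smul, LinearMap.aeval_self_charpoly]
    simp
  obtain ⟨ι, hι, p, hp, e, ⟨g⟩⟩ := Module.equiv_directSum_of_isTorsion hTor
  set q : ι → F[X] := fun i => p i ^ e i with hqdef
  have hq : ∀ i, q i ≠ 0 := fun i => pow_ne_zero _ (hp i).ne_zero
  set E : (Fin n → F) → ⨁ i, F[X] ⧸ (F[X] ∙ q i) :=
    fun u => g (Module.AEval'.of f u) with hE
  have hE_add : ∀ u v, E (u + v) = E u + E v := by intro u v; simp [hE, map_add]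
  have hE_smul : ∀ (c : F) u, E (c • u) = (C c : F[X]) • E u := by
    intro c u
    show g (Module.AEval'.of f (c • u)) = _
    rw [_root_.map_smul, ← Module.AEval.C_smul, _root_.map_smul]
  have hE_X : ∀ u, E (A' *ᵥ u) = (X : F[X]) • E u := by
    intro u
    show g (Module.AEval'.of f (A' *ᵥ u)) = _
    rw [show A' *ᵥ u = f u from rfl, ← Module.AEval'.X_smul_of, _root_.map_smul]
  have hE_bij : Function.Bijective E :=
    (((Module.AEval'.of f).toEquiv.trans g.toEquiv)).bijective
  set B : (Fin n → F) → (Fin n → F) → F :=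
    fun u v => ∑ i, resid (q i) ((E u) i * (E v) i) with hB
  have hB_symm : ∀ u v, B u v = B v u := by
    intro u v; simp only [hB]
    exact Finset.sum_congr rfl fun i _ => by rw [mul_comm]
  have hB_addl : ∀ u u' v, B (u + u') v = B u v + B u' v := by
    intro u u' v; simp only [hB, hE_add]
    rw [← Finset.sum_add_distrib]
    refine Finset.sum_congr rfl fun i _ => ?_
    rw [DirectSum.add_apply, add_mul, resid_add (hq i)]
  have hB_smull : ∀ (c : F) u v, B (c • u) v = c * B u v := by
    intro c u v; simp only [hB, hE_smul]
    rw [Finset.mul_sum]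
    refine Finset.sum_congr rfl fun i _ => ?_
    rw [DFinsupp.smul_apply, smul_eq_mk_mul, mul_assoc, resid_C_mul (hq i)]
  have hB_selfadj : ∀ u v, B (A' *ᵥ u) v = B u (A' *ᵥ v) := by
    intro u v; simp only [hB, hE_X]
    refine Finset.sum_congr rfl fun i _ => ?_
    rw [DFinsupp.smul_apply, DFinsupp.smul_apply, smul_eq_mk_mul, smul_eq_mk_mul]
    ring_nf
  set Bl : (Fin n → F) →ₗ[F] (Fin n → F) →ₗ[F] F :=
    LinearMap.mk₂ F B hB_addl
      (fun c u v => (hB_smull c u v).trans (smul_eq_mul ..).symm)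
      (fun u v v' => by rw [hB_symm, hB_addl, hB_symm v u, hB_symm v' u])
      (fun c u v => by
        rw [hB_symm, hB_smull, hB_symm v u, smul_eq_mul]) with hBl
  set S : Matrix (Fin n) (Fin n) F := LinearMap.toMatrix₂' F Bl with hS
  have key : ∀ u v, B u v = u ⬝ᵥ S *ᵥ v := by
    intro u v
    rw [← Matrix.toLinearMap₂'_apply' S u v, hS, Matrix.toLinearMap₂'_toMatrix']
    rfl
  have hSsymm : Sᵀ = S := by
    ext i j
    show S j i = S i j
    rw [hS, LinearMap.toMatrix₂'_apply, LinearMap.toMatrix₂'_apply]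
    exact hB_symm _ _
  have hdet : S.det ≠ 0 := by
    intro h
    obtain ⟨v, hv, hv0⟩ := Matrix.exists_mulVec_eq_zero_iff.mpr h
    have hE0 : E (0 : Fin n → F) = 0 := by simp [hE, map_zero]
    have hEv : E v ≠ 0 := fun h0 => hv (hE_bij.injective (by rw [h0, hE0]))
    obtain ⟨i, hi⟩ : ∃ i, (E v) i ≠ 0 := by
      by_contra hcon; push_neg at hcon; exact hEv (DFinsupp.ext hcon)
    obtain ⟨y, hy⟩ := resid_nondeg (hq i) _ hi
    set w : ⨁ i, F[X] ⧸ (F[X] ∙ q i) := DirectSum.of (fun i => F[X] ⧸ (F[X] ∙ q i)) i y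
      with hw
    set u := (Module.AEval'.of f).symm (g.symm w) with hu
    have hEu : E u = w := by
      show g ((Module.AEval'.of f) ((Module.AEval'.of f).symm (g.symm w))) = w
      rw [LinearEquiv.apply_symm_apply, LinearEquiv.apply_symm_apply]
    have h2 : B u v = resid (q i) (y * (E v) i) := by
      show (∑ j, resid (q j) ((E u) j * (E v) j)) = _
      rw [hEu, Finset.sum_eq_single i]
      · rw [hw, DirectSum.of_eq_same]
      · intro j _ hj
        rw [hw, DirectSum.of_eq_of_ne _ _ _ hj, zero_mul, resid_zero (hq j)]
      · intro hni; exact absurd (Finset.mem_univ i) hni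
    have hBuv : B u v = 0 := by rw [key, hv0, dotProduct_zero]
    rw [h2, mul_comm] at hBuv
    exact hy hBuv
  have hpoint : ∀ u v, u ⬝ᵥ ((A'ᵀ * S) *ᵥ v) = u ⬝ᵥ ((S * A') *ᵥ v) := by
    intro u v
    have h3 := hB_selfadj u v
    rw [key, key] at h3
    calc u ⬝ᵥ ((A'ᵀ * S) *ᵥ v) = u ⬝ᵥ (A'ᵀ *ᵥ (S *ᵥ v)) := by rw [Matrix.mulVec_mulVec]
      _ = (A' *ᵥ u) ⬝ᵥ (S *ᵥ v) := by
          rw [Matrix.mulVec_transpose, dotProduct_comm, ← Matrix.dotProduct_mulVec,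
            dotProduct_comm]
      _ = u ⬝ᵥ (S *ᵥ (A' *ᵥ v)) := h3
      _ = u ⬝ᵥ ((S * A') *ᵥ v) := by rw [Matrix.mulVec_mulVec]
  have hAdj : A'ᵀ * S = S * A' := by
    ext i j
    have h4 := hpoint (Pi.single i 1) (Pi.single j 1)
    simpa [Matrix.mulVec_single, single_dotProduct] using h4
  have hSunit : IsUnit S.det := isUnit_iff_ne_zero.mpr hdet
  refine ⟨(Matrix.nonsingInvUnit S hSunit)⁻¹, Matrix.nonsingInvUnit S hSunit * A, ?_, ?_, ?_⟩
  · show (S⁻¹ : Matrix (Fin n) (Fin n) F)ᵀ = S⁻¹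
    rw [Matrix.transpose_nonsing_inv, hSsymm]
  · show (S * A' : Matrix (Fin n) (Fin n) F)ᵀ = S * A'
    rw [Matrix.transpose_mul, hSsymm, hAdj]
  · exact (inv_mul_cancel_left _ _).symm
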